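/- For every permutation w ∈ S_n, the composite of Demazure operators δ_{i_1} ∘ δ_{i_2} ∘ … ∘ δ_{i_k} associated to a reduced expression w = s_{i_1} s_{i_2} ⋯ s_{i_k} (a product of adjacent transpositions of minimal length k = ℓ(w)) is independent of the choice of reduced expression; hence there is a well-defined operator δ_w ∈ End_Λ(R) for each w ∈ S_n. -/

import Mathlib

open MvPolynomial
set_option linter.deprecated false
set_option synthInstance.maxHeartbeats 1000000
set_option maxHeartbeats 1000000

open Equiv Finset

namespace DemAux

variable {N : ℕ}

/-- The inversion set of a permutation of `Fin N`. -/
def Dset (w : Equiv.Perm (Fin N)) : Finset (Fin N × Fin N) :=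
  Finset.univ.filter (fun p => p.1 < p.2 ∧ w p.2 < w p.1)

def inv (w : Equiv.Perm (Fin N)) : ℕ := (Dset w).card

lemma mem_Dset {w : Equiv.Perm (Fin N)} {p : Fin N × Fin N} :
    p ∈ Dset w ↔ p.1 < p.2 ∧ w p.2 < w p.1 := by
  simp [Dset]

@[simp] lemma inv_one : inv (1 : Equiv.Perm (Fin N)) = 0 := by
  simp only [inv, Dset]
  rw [Finset.card_eq_zero, Finset.filter_eq_empty_iff]
  rintro p -
  rintro ⟨h1, h2⟩
  simp only [Perm.one_apply] at h2
  exact absurd h1 (not_lt.2 h2.le)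

lemma inv_inv_perm (w : Equiv.Perm (Fin N)) : inv w⁻¹ = inv w := by
  unfold inv
  apply Finset.card_nbij' (i := fun p => (w⁻¹ p.2, w⁻¹ p.1)) (j := fun p => (w p.2, w p.1))
  · rintro ⟨a, b⟩ hab
    rw [Finset.mem_coe, mem_Dset] at hab ⊢
    simpa using ⟨hab.2, hab.1⟩
  · rintro ⟨a, b⟩ hab
    rw [Finset.mem_coe, mem_Dset] at hab ⊢
    simpa using ⟨hab.2, hab.1⟩
  · rintro ⟨a, b⟩ _; simp
  · rintro ⟨a, b⟩ _; simp

/-- order behaviour of an adjacent swap -/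
lemma swap_lt_swap_iff {c s a b : Fin N} (hcs : (c : ℕ) + 1 = (s : ℕ))
    (h1 : ¬(a = c ∧ b = s)) (h2 : ¬(a = s ∧ b = c)) :
    swap c s a < swap c s b ↔ a < b := by
  simp only [Fin.lt_def, swap_apply_def]
  split_ifs <;> (simp only [Fin.ext_iff, not_and, Fin.lt_def] at *; try omega)

end DemAux

namespace DemAux

variable {N : ℕ}

lemma card_E (w : Equiv.Perm (Fin N)) (c s : Fin N) :
    inv (w * swap c s) =
      (Finset.univ.filter
        (fun q : Fin N × Fin N => swap c s q.1 < swap c s q.2 ∧ w q.2 < w q.1)).card := by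
  unfold inv
  apply Finset.card_nbij' (i := fun p => (swap c s p.1, swap c s p.2))
    (j := fun p => (swap c s p.1, swap c s p.2))
  · rintro ⟨a, b⟩ hab
    rw [Finset.mem_coe, mem_Dset] at hab
    simp only [Finset.mem_coe, Finset.mem_filter, Finset.mem_univ, true_and, swap_apply_self]
    exact ⟨hab.1, hab.2⟩
  · rintro ⟨a, b⟩ hab
    simp only [Finset.mem_coe, Finset.mem_filter, Finset.mem_univ, true_and] at hab
    rw [Finset.mem_coe, mem_Dset]
    simp only [Equiv.Perm.mul_apply, swap_apply_self]
    exact ⟨hab.1, hab.2⟩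
  · rintro ⟨a, b⟩ _; simp
  · rintro ⟨a, b⟩ _; simp

lemma inv_mul_swap_of_lt {w : Equiv.Perm (Fin N)} {c s : Fin N} (hcs : (c : ℕ) + 1 = s)
    (h : w c < w s) : inv (w * swap c s) = inv w + 1 := by
  have hcs' : c < s := by rw [Fin.lt_def]; omega
  rw [card_E]
  have hE : (Finset.univ.filter
      (fun q : Fin N × Fin N => swap c s q.1 < swap c s q.2 ∧ w q.2 < w q.1))
      = insert (s, c) (Dset w) := by
    ext ⟨a, b⟩
    simp only [Finset.mem_filter, Finset.mem_univ, true_and, Finset.mem_insert, mem_Dset,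
      Prod.mk.injEq]
    constructor
    · rintro ⟨h1, h2⟩
      by_cases hab1 : a = c ∧ b = s
      · obtain ⟨rfl, rfl⟩ := hab1
        rw [swap_apply_left, swap_apply_right] at h1
        exact absurd h1 (not_lt.2 hcs'.le)
      by_cases hab2 : a = s ∧ b = c
      · exact Or.inl hab2
      · exact Or.inr ⟨(swap_lt_swap_iff hcs hab1 hab2).1 h1, h2⟩
    · rintro (⟨rfl, rfl⟩ | ⟨h1, h2⟩)
      · rw [swap_apply_left, swap_apply_right]
        exact ⟨hcs', h⟩
      · have hab1 : ¬(a = c ∧ b = s) := by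
          rintro ⟨rfl, rfl⟩; exact absurd h2 (not_lt.2 h.le)
        have hab2 : ¬(a = s ∧ b = c) := by
          rintro ⟨rfl, rfl⟩; exact absurd h1 (not_lt.2 hcs'.le)
        exact ⟨(swap_lt_swap_iff hcs hab1 hab2).2 h1, h2⟩
  rw [hE, Finset.card_insert_of_notMem, inv]
  rw [mem_Dset]
  rintro ⟨h1, -⟩
  exact absurd h1 (not_lt.2 hcs'.le)

lemma inv_mul_swap_of_gt {w : Equiv.Perm (Fin N)} {c s : Fin N} (hcs : (c : ℕ) + 1 = s)
    (h : w s < w c) : inv (w * swap c s) + 1 = inv w := by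
  have hcs' : c < s := by rw [Fin.lt_def]; omega
  rw [card_E]
  have hE : (Finset.univ.filter
      (fun q : Fin N × Fin N => swap c s q.1 < swap c s q.2 ∧ w q.2 < w q.1))
      = (Dset w).erase (c, s) := by
    ext ⟨a, b⟩
    simp only [Finset.mem_filter, Finset.mem_univ, true_and, Finset.mem_erase, mem_Dset,
      Prod.mk.injEq, ne_eq, not_and]
    constructor
    · rintro ⟨h1, h2⟩
      by_cases hab1 : a = c ∧ b = s
      · obtain ⟨rfl, rfl⟩ := hab1
        rw [swap_apply_left, swap_apply_right] at h1
        exact absurd h1 (not_lt.2 hcs'.le)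
      by_cases hab2 : a = s ∧ b = c
      · obtain ⟨rfl, rfl⟩ := hab2
        exact absurd h2 (not_lt.2 h.le)
      · exact ⟨fun ha hb => hab1 ⟨ha, hb⟩, (swap_lt_swap_iff hcs hab1 hab2).1 h1, h2⟩
    · rintro ⟨hne, h1, h2⟩
      have hab1 : ¬(a = c ∧ b = s) := fun ⟨ha, hb⟩ => hne ha hb
      have hab2 : ¬(a = s ∧ b = c) := by
        rintro ⟨rfl, rfl⟩; exact absurd h1 (not_lt.2 hcs'.le)
      exact ⟨(swap_lt_swap_iff hcs hab1 hab2).2 h1, h2⟩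
  rw [hE, Finset.card_erase_add_one, inv]
  rw [mem_Dset]
  exact ⟨hcs', h⟩

/-- Left multiplication step. -/
lemma left_step (w : Equiv.Perm (Fin N)) {c s : Fin N} (hcs : (c : ℕ) + 1 = s) :
    (w⁻¹ s < w⁻¹ c ∧ inv (swap c s * w) + 1 = inv w) ∨
    (w⁻¹ c < w⁻¹ s ∧ inv (swap c s * w) = inv w + 1) := by
  have hcs' : c ≠ s := by intro h; rw [h] at hcs; omega
  have key : swap c s * w = (w⁻¹ * swap c s)⁻¹ := by
    rw [mul_inv_rev, inv_inv, swap_inv]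
  rcases lt_or_gt_of_ne (fun h : w⁻¹ c = w⁻¹ s => hcs' (w⁻¹.injective h)) with hlt | hgt
  · right
    refine ⟨hlt, ?_⟩
    rw [key, inv_inv_perm, inv_mul_swap_of_lt hcs hlt, inv_inv_perm]
  · left
    refine ⟨hgt, ?_⟩
    rw [key, inv_inv_perm, inv_mul_swap_of_gt hcs hgt, inv_inv_perm]

end DemAux

namespace DemAux

variable {n : ℕ}

def sg (i : Fin n) : Equiv.Perm (Fin (n + 1)) := swap i.castSucc i.succ

def pw (l : List (Fin n)) : Equiv.Perm (Fin (n + 1)) := (l.map sg).prod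

@[simp] lemma pw_nil : pw ([] : List (Fin n)) = 1 := rfl

@[simp] lemma pw_cons (i : Fin n) (t : List (Fin n)) : pw (i :: t) = sg i * pw t := by
  simp [pw]

lemma adj (i : Fin n) : ((i.castSucc : Fin (n+1)) : ℕ) + 1 = (i.succ : ℕ) := by simp

@[simp] lemma sg_mul_self (i : Fin n) : sg i * sg i = 1 := by
  simp [sg, swap_mul_self]

lemma sg_mul_cancel (i : Fin n) (w : Equiv.Perm (Fin (n+1))) : sg i * (sg i * w) = w := by
  rw [← mul_assoc, sg_mul_self, one_mul]

lemma sg_step (i : Fin n) (w : Equiv.Perm (Fin (n + 1))) :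
    (w⁻¹ i.succ < w⁻¹ i.castSucc ∧ inv (sg i * w) + 1 = inv w) ∨
    (w⁻¹ i.castSucc < w⁻¹ i.succ ∧ inv (sg i * w) = inv w + 1) :=
  left_step w (adj i)

lemma inv_le_length (l : List (Fin n)) : inv (pw l) ≤ l.length := by
  induction l with
  | nil => simp
  | cons i t ih =>
    rw [pw_cons]
    rcases sg_step i (pw t) with ⟨-, h⟩ | ⟨-, h⟩ <;> simp_all <;> omega

lemma descent_exists {w : Equiv.Perm (Fin (n + 1))} (hw : w ≠ 1) :
    ∃ i : Fin n, w⁻¹ i.succ < w⁻¹ i.castSucc := by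
  by_contra hcon
  push_neg at hcon
  have hsm : StrictMono (⇑w⁻¹) := by
    rw [Fin.strictMono_iff_lt_succ]
    intro i
    rcases lt_or_eq_of_le (hcon i) with h | h
    · exact h
    · exact absurd (w⁻¹.injective h) (by simp [Fin.ext_iff])
  have : ⇑w⁻¹ = id := by
    refine (hsm.range_inj strictMono_id).1 ?_
    rw [Set.range_id]
    exact w⁻¹.surjective.range_eq
  apply hw
  have : w⁻¹ = 1 := Equiv.ext fun x => congrFun this x
  rw [← inv_inv w, this]; exact _root_.inv_one

lemma exists_word (w : Equiv.Perm (Fin (n + 1))) :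
    ∃ l : List (Fin n), pw l = w ∧ l.length = inv w := by
  generalize hk : inv w = k
  induction k using Nat.strong_induction_on generalizing w with
  | _ k ih =>
    rcases eq_or_ne w 1 with rfl | hw
    · exact ⟨[], by simp, by simp [← hk]⟩
    · obtain ⟨i, hi⟩ := descent_exists hw
      rcases sg_step i w with ⟨-, h⟩ | ⟨hlt, -⟩
      · obtain ⟨l, hl, hlen⟩ := ih (inv (sg i * w)) (by omega) (sg i * w) rfl
        exact ⟨i :: l, by rw [pw_cons, hl, sg_mul_cancel], by simp [hlen]; omega⟩
      · exact absurd hi (not_lt.2 hlt.le)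

end DemAux

namespace DemAux

variable {n : ℕ}

lemma sg_comm {i j : Fin n} (h1 : (i : ℕ) + 1 ≠ (j : ℕ)) (h2 : (j : ℕ) + 1 ≠ (i : ℕ))
    (hne : i ≠ j) : sg i * sg j = sg j * sg i := by
  have hne' : (i : ℕ) ≠ (j : ℕ) := fun h => hne (Fin.ext h)
  have hd : Equiv.Perm.Disjoint (sg i) (sg j) := by
    intro x
    by_cases hx : x = i.castSucc ∨ x = i.succ
    · right
      apply swap_apply_of_ne_of_ne
      · rcases hx with rfl | rfl <;> (simp [Fin.ext_iff]; omega)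
      · rcases hx with rfl | rfl <;> (simp [Fin.ext_iff]; omega)
    · left
      push_neg at hx
      exact swap_apply_of_ne_of_ne hx.1 hx.2
  exact hd.commute.eq

lemma sg_braid {i j : Fin n} (hij : (j : ℕ) = (i : ℕ) + 1) :
    sg i * sg j * sg i = sg j * sg i * sg j := by
  have hb : j.castSucc = i.succ := by simp [Fin.ext_iff, hij]
  set a := i.castSucc
  set b := i.succ
  set c := j.succ
  have hab : a ≠ b := by simp [a, b, Fin.ext_iff]
  have hbc : b ≠ c := by simp [b, c, Fin.ext_iff, hij]
  have hac : a ≠ c := by simp [a, c, Fin.ext_iff, hij]; try omega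
  have e1 : sg i * sg j * sg i = swap a b * swap b c * swap a b := by
    rw [sg, sg, hb]
  have e2 : sg j * sg i * sg j = swap b c * swap a b * swap b c := by
    rw [sg, sg, hb]
  rw [e1, e2]
  calc swap a b * swap b c * swap a b
      = swap b a * swap c b * swap b a := by rw [swap_comm a b, swap_comm b c]
    _ = swap a c := swap_mul_swap_mul_swap hbc.symm hac.symm
    _ = swap c a := swap_comm a c
    _ = swap b c * swap a b * swap b c := (swap_mul_swap_mul_swap hab hac).symm

end DemAux

namespace DemAux

open MvPolynomial

variable {n : ℕ}

lemma X_sub_ne {a b : Fin (n+1)} (h : a ≠ b) :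
    (X a - X b : MvPolynomial (Fin (n+1)) ℂ) ≠ 0 :=
  sub_ne_zero_of_ne (fun hx => h (X_injective hx))

lemma rename_swap_swap {a b : Fin (n+1)} (f : MvPolynomial (Fin (n+1)) ℂ) :
    rename ⇑(swap a b) (rename ⇑(swap a b) f) = f := by
  rw [rename_rename]
  have : ⇑(swap a b) ∘ ⇑(swap a b) = id := funext fun x => swap_apply_self a b x
  rw [this, rename_id, AlgHom.id_apply]

variable (D : Fin n → Module.End (symmetricSubalgebra (Fin (n + 1)) ℂ)
      (MvPolynomial (Fin (n + 1)) ℂ))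
    (hD : ∀ (i : Fin n) (f : MvPolynomial (Fin (n + 1)) ℂ),
      D i f * (X i.castSucc - X i.succ) =
        rename (⇑(Equiv.swap i.castSucc i.succ)) f - f)

include hD

lemma DR2 {i j : Fin n} (h1 : (i : ℕ) + 1 ≠ (j : ℕ)) (h2 : (j : ℕ) + 1 ≠ (i : ℕ))
    (hne : i ≠ j) : D i * D j = D j * D i := by
  apply LinearMap.ext; intro f
  simp only [Module.End.mul_apply]
  set a := i.castSucc
  set b := i.succ
  set c := j.castSucc
  set d := j.succ
  have hca : c ≠ a := by simp [a, c, Fin.ext_iff]; exact fun h => hne (Fin.ext h).symm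
  have hcb : c ≠ b := by simp [b, c, Fin.ext_iff]; omega
  have hda : d ≠ a := by simp [a, d, Fin.ext_iff]; omega
  have hdb : d ≠ b := by simp [b, d, Fin.ext_iff]; exact fun h => hne (Fin.ext h).symm
  have hab : a ≠ b := by simp [a, b, Fin.ext_iff]
  have hcd : c ≠ d := by simp [c, d, Fin.ext_iff]
  -- apply rename swap a b to hD j f
  have eS : rename ⇑(swap a b) (D j f) * (X c - X d)
      = rename (⇑(swap a b) ∘ ⇑(swap c d)) f - rename ⇑(swap a b) f := by
    have := congrArg (rename (R := ℂ) ⇑(swap a b)) (hD j f)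
    simp only [map_mul, map_sub, rename_X, rename_rename] at this
    rwa [swap_apply_of_ne_of_ne hca hcb, swap_apply_of_ne_of_ne hda hdb] at this
  have eT : rename ⇑(swap c d) (D i f) * (X a - X b)
      = rename (⇑(swap c d) ∘ ⇑(swap a b)) f - rename ⇑(swap c d) f := by
    have := congrArg (rename (R := ℂ) ⇑(swap c d)) (hD i f)
    simp only [map_mul, map_sub, rename_X, rename_rename] at this
    rwa [swap_apply_of_ne_of_ne hca.symm hda.symm,
      swap_apply_of_ne_of_ne hcb.symm hdb.symm] at this
  have hcomm : ⇑(swap a b) ∘ ⇑(swap c d) = ⇑(swap c d) ∘ ⇑(swap a b) := by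
    rw [← Equiv.Perm.coe_mul, ← Equiv.Perm.coe_mul]
    exact congrArg _ (sg_comm h1 h2 hne)
  have key1 : D i (D j f) * ((X a - X b) * (X c - X d))
      = (rename (⇑(swap a b) ∘ ⇑(swap c d)) f - rename ⇑(swap a b) f)
        - (rename ⇑(swap c d) f - f) := by
    have e1 : D i (D j f) * ((X a - X b) * (X c - X d))
        = (D i (D j f) * (X a - X b)) * (X c - X d) := by ring
    rw [e1, hD i (D j f)]
    have e2 : (rename (⇑(swap a b)) (D j f) - D j f) * (X c - X d)
        = rename (⇑(swap a b)) (D j f) * (X c - X d) - D j f * (X c - X d) := by ring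
    rw [e2, eS, hD j f]
  have key2 : D j (D i f) * ((X a - X b) * (X c - X d))
      = (rename (⇑(swap c d) ∘ ⇑(swap a b)) f - rename ⇑(swap c d) f)
        - (rename ⇑(swap a b) f - f) := by
    have e1 : D j (D i f) * ((X a - X b) * (X c - X d))
        = (D j (D i f) * (X c - X d)) * (X a - X b) := by ring
    rw [e1, hD j (D i f)]
    have e2 : (rename (⇑(swap c d)) (D i f) - D i f) * (X a - X b)
        = rename (⇑(swap c d)) (D i f) * (X a - X b) - D i f * (X a - X b) := by ring
    rw [e2, eT, hD i f]
  have hnz : (X a - X b) * (X c - X d) ≠ (0 : MvPolynomial (Fin (n+1)) ℂ) :=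
    mul_ne_zero (X_sub_ne hab) (X_sub_ne hcd)
  apply mul_right_cancel₀ hnz
  rw [key1, key2, hcomm]
  ring

end DemAux

namespace DemAux

open MvPolynomial

variable {n : ℕ}
  (D : Fin n → Module.End (symmetricSubalgebra (Fin (n + 1)) ℂ)
      (MvPolynomial (Fin (n + 1)) ℂ))
  (hD : ∀ (i : Fin n) (f : MvPolynomial (Fin (n + 1)) ℂ),
      D i f * (X i.castSucc - X i.succ) =
        rename (⇑(Equiv.swap i.castSucc i.succ)) f - f)

include hD

lemma DR3 {i j : Fin n} (hij : (j : ℕ) = (i : ℕ) + 1) :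
    D i * D j * D i = D j * D i * D j := by
  apply LinearMap.ext; intro f
  simp only [Module.End.mul_apply]
  have hb : j.castSucc = i.succ := by simp [Fin.ext_iff, hij]
  set a := i.castSucc with ha_def
  set b := i.succ with hb_def
  set c := j.succ with hc_def
  have hab : a ≠ b := by simp [a, b, Fin.ext_iff]
  have hbc : b ≠ c := by simp [b, c, Fin.ext_iff, hij]
  have hac : a ≠ c := by simp [a, c, Fin.ext_iff, hij]; try omega
  have hDj : ∀ g, D j g * (X b - X c) = rename ⇑(swap b c) g - g := by
    intro g
    have := hD j g
    rwa [hb] at this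
  have hDi : ∀ g, D i g * (X a - X b) = rename ⇑(swap a b) g - g := hD i
  -- swap application facts
  have sa : swap a b a = b := swap_apply_left a b
  have sb : swap a b b = a := swap_apply_right a b
  have sc : swap a b c = c := swap_apply_of_ne_of_ne hac.symm hbc.symm
  have ta : swap b c a = a := swap_apply_of_ne_of_ne hab hac
  have tb : swap b c b = c := swap_apply_left b c
  have tc : swap b c c = b := swap_apply_right b c
  set A1 := D i f with hA1
  set A2 := D j A1 with hA2
  set B1 := D j f with hB1
  set B2 := D i B1 with hB2
  have h1 : A1 * (X a - X b) = rename ⇑(swap a b) f - f := hDi f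
  have h2 : A2 * (X b - X c) = rename ⇑(swap b c) A1 - A1 := hDj A1
  have h3 : D i A2 * (X a - X b) = rename ⇑(swap a b) A2 - A2 := hDi A2
  have h1' : B1 * (X b - X c) = rename ⇑(swap b c) f - f := hDj f
  have h2' : B2 * (X a - X b) = rename ⇑(swap a b) B1 - B1 := hDi B1
  have h3' : D j B2 * (X b - X c) = rename ⇑(swap b c) B2 - B2 := hDj B2
  -- S A1 = A1
  have sA1 : rename ⇑(swap a b) A1 = A1 := by
    have e := congrArg (rename (R := ℂ) ⇑(swap a b)) h1
    simp only [map_mul, map_sub, rename_X, rename_rename, sa, sb] at e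
    rw [show ⇑(swap a b) ∘ ⇑(swap a b) = id from funext fun x => swap_apply_self a b x,
      rename_id, AlgHom.id_apply] at e
    apply mul_right_cancel₀ (X_sub_ne hab)
    rw [h1]
    linear_combination -e
  have tB1 : rename ⇑(swap b c) B1 = B1 := by
    have e := congrArg (rename (R := ℂ) ⇑(swap b c)) h1'
    simp only [map_mul, map_sub, rename_X, rename_rename, tb, tc] at e
    rw [show ⇑(swap b c) ∘ ⇑(swap b c) = id from funext fun x => swap_apply_self b c x,
      rename_id, AlgHom.id_apply] at e
    apply mul_right_cancel₀ (X_sub_ne hbc)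
    rw [h1']
    linear_combination -e
  -- T A1 * rc = TS f - T f
  have tA1 : rename ⇑(swap b c) A1 * (X a - X c)
      = rename (⇑(swap b c) ∘ ⇑(swap a b)) f - rename ⇑(swap b c) f := by
    have e := congrArg (rename (R := ℂ) ⇑(swap b c)) h1
    simp only [map_mul, map_sub, rename_X, rename_rename, ta, tb] at e
    exact e
  have sB1 : rename ⇑(swap a b) B1 * (X a - X c)
      = rename (⇑(swap a b) ∘ ⇑(swap b c)) f - rename ⇑(swap a b) f := by
    have e := congrArg (rename (R := ℂ) ⇑(swap a b)) h1'
    simp only [map_mul, map_sub, rename_X, rename_rename, sb, sc] at e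
    exact e
  -- S T A1 * rb = STS f - ST f
  have stA1 : rename (⇑(swap a b) ∘ ⇑(swap b c)) A1 * (X b - X c)
      = rename (⇑(swap a b) ∘ ⇑(swap b c) ∘ ⇑(swap a b)) f
        - rename (⇑(swap a b) ∘ ⇑(swap b c)) f := by
    have e := congrArg (rename (R := ℂ) ⇑(swap a b)) tA1
    simp only [map_mul, map_sub, rename_X, rename_rename, sa, sc] at e
    exact e
  have tsB1 : rename (⇑(swap b c) ∘ ⇑(swap a b)) B1 * (X a - X b)
      = rename (⇑(swap b c) ∘ ⇑(swap a b) ∘ ⇑(swap b c)) f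
        - rename (⇑(swap b c) ∘ ⇑(swap a b)) f := by
    have e := congrArg (rename (R := ℂ) ⇑(swap b c)) sB1
    simp only [map_mul, map_sub, rename_X, rename_rename, ta, tc] at e
    exact e
  -- S A2 * rc = S T A1 - A1
  have sA2 : rename ⇑(swap a b) A2 * (X a - X c)
      = rename (⇑(swap a b) ∘ ⇑(swap b c)) A1 - A1 := by
    have e := congrArg (rename (R := ℂ) ⇑(swap a b)) h2
    simp only [map_mul, map_sub, rename_X, rename_rename, sb, sc] at e
    rwa [sA1] at e
  have tB2 : rename ⇑(swap b c) B2 * (X a - X c)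
      = rename (⇑(swap b c) ∘ ⇑(swap a b)) B1 - B1 := by
    have e := congrArg (rename (R := ℂ) ⇑(swap b c)) h2'
    simp only [map_mul, map_sub, rename_X, rename_rename, ta, tb] at e
    rwa [tB1] at e
  have key1 : D i A2 * ((X a - X b) * ((X b - X c) * (X a - X c)))
      = rename (⇑(swap a b) ∘ ⇑(swap b c) ∘ ⇑(swap a b)) f
        - rename (⇑(swap a b) ∘ ⇑(swap b c)) f
        - rename (⇑(swap b c) ∘ ⇑(swap a b)) f
        + rename ⇑(swap b c) f + rename ⇑(swap a b) f - f := by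
    linear_combination ((X b - X c) * (X a - X c)) * h3 + (X b - X c) * sA2
      - (X a - X c) * h2 + stA1 - tA1 + h1
  have key2 : D j B2 * ((X a - X b) * ((X b - X c) * (X a - X c)))
      = rename (⇑(swap b c) ∘ ⇑(swap a b) ∘ ⇑(swap b c)) f
        - rename (⇑(swap b c) ∘ ⇑(swap a b)) f
        - rename (⇑(swap a b) ∘ ⇑(swap b c)) f
        + rename ⇑(swap a b) f + rename ⇑(swap b c) f - f := by
    linear_combination ((X a - X b) * (X a - X c)) * h3' + (X a - X b) * tB2
      - (X a - X c) * h2' + tsB1 - sB1 + h1'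
  have hbraid : (⇑(swap a b) ∘ ⇑(swap b c) ∘ ⇑(swap a b))
      = (⇑(swap b c) ∘ ⇑(swap a b) ∘ ⇑(swap b c)) := by
    rw [← Equiv.Perm.coe_mul, ← Equiv.Perm.coe_mul, ← Equiv.Perm.coe_mul,
      ← Equiv.Perm.coe_mul, ← mul_assoc, ← mul_assoc]
    apply congrArg
    have := sg_braid hij
    simpa [sg, hb] using this
  have hnz : (X a - X b) * ((X b - X c) * (X a - X c)) ≠ (0 : MvPolynomial (Fin (n+1)) ℂ) :=
    mul_ne_zero (X_sub_ne hab) (mul_ne_zero (X_sub_ne hbc) (X_sub_ne hac))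
  apply mul_right_cancel₀ hnz
  rw [key1, key2, hbraid]
  ring

end DemAux

namespace DemAux

open MvPolynomial

variable {n : ℕ}

lemma sg_fix {i : Fin n} {x : Fin (n+1)} (h1 : (x : ℕ) ≠ (i : ℕ)) (h2 : (x : ℕ) ≠ (i : ℕ) + 1) :
    sg i x = x :=
  swap_apply_of_ne_of_ne (by simp [Fin.ext_iff]; omega) (by simp [Fin.ext_iff]; omega)

lemma sg_cs (i : Fin n) : sg i i.castSucc = i.succ := swap_apply_left _ _
lemma sg_sc (i : Fin n) : sg i i.succ = i.castSucc := swap_apply_right _ _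

lemma inv_sg_mul (i : Fin n) (w : Equiv.Perm (Fin (n+1))) (x : Fin (n+1)) :
    (sg i * w)⁻¹ x = w⁻¹ (sg i x) := by
  rw [mul_inv_rev]
  have : (sg i)⁻¹ = sg i := by rw [sg, swap_inv]
  rw [this, Equiv.Perm.mul_apply]

lemma descent_inv {i : Fin n} {w : Equiv.Perm (Fin (n+1))}
    (hd : w⁻¹ i.succ < w⁻¹ i.castSucc) : inv (sg i * w) + 1 = inv w := by
  rcases sg_step i w with ⟨-, h⟩ | ⟨hlt, -⟩
  · exact h
  · exact absurd hd (not_lt.2 hlt.le)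

variable (D : Fin n → Module.End (symmetricSubalgebra (Fin (n + 1)) ℂ)
      (MvPolynomial (Fin (n + 1)) ℂ))
  (hD : ∀ (i : Fin n) (f : MvPolynomial (Fin (n + 1)) ℂ),
      D i f * (X i.castSucc - X i.succ) =
        rename (⇑(Equiv.swap i.castSucc i.succ)) f - f)

include hD


lemma adj_case (k : ℕ)
    (IH : ∀ m, m < k → ∀ l₁ l₂ : List (Fin n), l₁.length = m → pw l₁ = pw l₂ →
      l₁.length = inv (pw l₁) → l₂.length = inv (pw l₂) →
      (l₁.map D).prod = (l₂.map D).prod)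
    {i j : Fin n} {t₁ t₂ : List (Fin n)} (hij : (j : ℕ) = (i : ℕ) + 1)
    {w : Equiv.Perm (Fin (n+1))}
    (hw1 : pw (i :: t₁) = w) (hw2 : pw (j :: t₂) = w)
    (hinvw : inv w = k)
    (hlen1 : t₁.length = k - 1) (hlen2 : t₂.length = k - 1)
    (d1 : w⁻¹ i.succ < w⁻¹ i.castSucc) (d2 : w⁻¹ j.succ < w⁻¹ j.castSucc) :
    ((i :: t₁).map D).prod = ((j :: t₂).map D).prod := by
  have hb : j.castSucc = i.succ := by simp [Fin.ext_iff, hij]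
  have ht1 : pw t₁ = sg i * w := by rw [← hw1, pw_cons, sg_mul_cancel]
  have ht2 : pw t₂ = sg j * w := by rw [← hw2, pw_cons, sg_mul_cancel]
  have hinv1 : inv (sg i * w) + 1 = inv w := descent_inv d1
  have hinv2 : inv (sg j * w) + 1 = inv w := descent_inv d2
  have d2' : (sg i * w)⁻¹ j.succ < (sg i * w)⁻¹ j.castSucc := by
    rw [inv_sg_mul, inv_sg_mul, hb, sg_sc,
      sg_fix (x := j.succ) (by simp [hij]; try omega) (by simp [hij]; try omega)]
    exact lt_trans (hb ▸ d2) d1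
  have hinv2' : inv (sg j * (sg i * w)) + 1 = inv (sg i * w) := descent_inv d2'
  have d1'' : (sg j * (sg i * w))⁻¹ i.succ < (sg j * (sg i * w))⁻¹ i.castSucc := by
    rw [inv_sg_mul, inv_sg_mul, inv_sg_mul, inv_sg_mul,
      show sg j i.succ = j.succ by rw [← hb, sg_cs],
      sg_fix (x := j.succ) (by simp [hij]; try omega) (by simp [hij]; try omega),
      show sg j i.castSucc = i.castSucc from
        sg_fix (by simp [hij]; try omega) (by simp [hij]; try omega),
      sg_cs]
    exact hb ▸ d2
  have hinv3 : inv (sg i * (sg j * (sg i * w))) + 1 = inv (sg j * (sg i * w)) :=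
    descent_inv d1''
  have hge3 : 3 ≤ k := by omega
  obtain ⟨u, hu, hulen⟩ := exists_word (sg i * (sg j * (sg i * w)))
  have hul : u.length = k - 3 := by omega
  have hjiu : pw (j :: i :: u) = sg i * w := by
    rw [pw_cons, pw_cons, hu, sg_mul_cancel, sg_mul_cancel]
  have hbraid := sg_braid hij
  have hiju : pw (i :: j :: u) = sg j * w := by
    rw [pw_cons, pw_cons, hu]
    calc sg i * (sg j * (sg i * (sg j * (sg i * w))))
        = (sg i * sg j * sg i) * sg j * sg i * w := by group
      _ = (sg j * sg i * sg j) * sg j * sg i * w := by rw [hbraid]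
      _ = sg j * (sg i * ((sg j * sg j) * (sg i * w))) := by group
      _ = sg j * (sg i * (1 * (sg i * w))) := by rw [sg_mul_self]
      _ = sg j * (sg i * (sg i * w)) := by rw [one_mul]
      _ = sg j * w := by rw [sg_mul_cancel]
  have e1 := IH (k - 1) (by omega) t₁ (j :: i :: u) (by omega) (by rw [ht1, hjiu])
    (by rw [ht1]; omega) (by rw [hjiu]; simp only [List.length_cons]; omega)
  have e2 := IH (k - 1) (by omega) t₂ (i :: j :: u) (by omega) (by rw [ht2, hiju])
    (by rw [ht2]; omega) (by rw [hiju]; simp only [List.length_cons]; omega)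
  simp only [List.map_cons, List.prod_cons] at e1 e2 ⊢
  rw [e1, e2]
  simp only [← mul_assoc]
  rw [DR3 D hD hij]

lemma main_ind (k : ℕ) :
    ∀ l₁ l₂ : List (Fin n), l₁.length = k → pw l₁ = pw l₂ →
      l₁.length = inv (pw l₁) → l₂.length = inv (pw l₂) →
      (l₁.map D).prod = (l₂.map D).prod := by
  induction k using Nat.strong_induction_on with
  | _ k ih =>
    intro l₁ l₂ hk hpw hr1 hr2
    rcases l₁ with _ | ⟨i, t₁⟩
    · rcases l₂ with _ | ⟨j, t₂⟩
      · rfl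
      · exfalso
        rw [← hpw] at hr2
        simp at hr2
    rcases l₂ with _ | ⟨j, t₂⟩
    · exfalso
      rw [hpw] at hr1
      simp at hr1
    -- both cons
    set w := pw (i :: t₁) with hw
    have hw2 : pw (j :: t₂) = w := hpw.symm
    have hkpos : 1 ≤ k := by simp at hk; omega
    have hinvw : inv w = k := by rw [← hr1, hk]
    have ht1 : pw t₁ = sg i * w := by
      rw [hw, pw_cons, sg_mul_cancel]
    have ht2 : pw t₂ = sg j * w := by
      rw [← hw2, pw_cons, sg_mul_cancel]
    have hlen1 : t₁.length = k - 1 := by simp at hk; omega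
    have hlen2 : t₂.length = k - 1 := by
      have := hr2
      rw [hw2] at this
      simp at this
      omega
    -- descents
    have d1 : w⁻¹ i.succ < w⁻¹ i.castSucc := by
      rcases sg_step i w with ⟨h, -⟩ | ⟨-, h⟩
      · exact h
      · exfalso
        have h1 : inv (pw t₁) ≤ t₁.length := inv_le_length t₁
        rw [ht1, h, hinvw] at h1
        omega
    have d2 : w⁻¹ j.succ < w⁻¹ j.castSucc := by
      rcases sg_step j w with ⟨h, -⟩ | ⟨-, h⟩
      · exact h
      · exfalso
        have h1 : inv (pw t₂) ≤ t₂.length := inv_le_length t₂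
        rw [ht2, h, hinvw] at h1
        omega
    have hinv1 : inv (sg i * w) = k - 1 := by
      have := descent_inv d1; omega
    have hinv2 : inv (sg j * w) = k - 1 := by
      have := descent_inv d2; omega
    have hred1 : t₁.length = inv (pw t₁) := by rw [ht1, hinv1, hlen1]
    have hred2 : t₂.length = inv (pw t₂) := by rw [ht2, hinv2, hlen2]
    by_cases hij : i = j
    · subst hij
      have e := ih (k - 1) (by omega) t₁ t₂ (by omega) (by rw [ht1, ht2]) hred1 hred2
      simp only [List.map_cons, List.prod_cons, e]
    -- i ≠ j
    have hijv : (i : ℕ) ≠ (j : ℕ) := fun h => hij (Fin.ext h)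
    by_cases hA : (j : ℕ) = (i : ℕ) + 1
    · exact adj_case D hD k ih hA hw.symm hw2 hinvw hlen1 hlen2 d1 d2
    by_cases hB : (i : ℕ) = (j : ℕ) + 1
    · exact (adj_case D hD k ih hB hw2 hw.symm hinvw hlen2 hlen1 d2 d1).symm
    · -- commuting case
      have hcomm : sg i * sg j = sg j * sg i := sg_comm (by omega) (by omega) hij
      -- descent of j at sg i * w
      have d2' : (sg i * w)⁻¹ j.succ < (sg i * w)⁻¹ j.castSucc := by
        rw [inv_sg_mul, inv_sg_mul, sg_fix (by simp; omega) (by simp; omega),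
          sg_fix (by simp; omega) (by simp; omega)]
        exact d2
      have hinvv : inv (sg j * (sg i * w)) = k - 2 := by
        have := descent_inv d2'
        omega
      have hk2' : 2 ≤ k := by have := descent_inv d2'; omega
      obtain ⟨u, hu, hulen⟩ := exists_word (sg j * (sg i * w))
      have hul : u.length = k - 2 := by rw [hulen, hinvv]
      -- word j :: u for sg i * w
      have hju : pw (j :: u) = sg i * w := by rw [pw_cons, hu, sg_mul_cancel]
      have hiu : pw (i :: u) = sg j * w := by
        rw [pw_cons, hu]
        calc sg i * (sg j * (sg i * w)) = (sg i * sg j) * sg i * w := by group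
          _ = (sg j * sg i) * sg i * w := by rw [hcomm]
          _ = sg j * (sg i * sg i) * w := by group
          _ = sg j * w := by rw [sg_mul_self, mul_one]
      have e1 := ih (k - 1) (by omega) t₁ (j :: u) (by omega) (by rw [ht1, hju])
        hred1 (by rw [hju]; simp only [List.length_cons]; omega)
      have e2 := ih (k - 1) (by omega) t₂ (i :: u) (by omega) (by rw [ht2, hiu])
        hred2 (by rw [hiu]; simp only [List.length_cons]; omega)
      simp only [List.map_cons, List.prod_cons] at e1 e2 ⊢
      rw [e1, e2, ← mul_assoc, ← mul_assoc, DR2 D hD (by omega) (by omega) hij]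

end DemAux


/-- for `w ∈ S_{n+1}`, the composite of Demazure operators along a
reduced expression `w = s_{i_1} ⋯ s_{i_k}` (product of adjacent transpositions of
minimal length) is independent of the choice of reduced expression, so `δ_w` is
well-defined.  (Here the Demazure operator `δ_i = D i`, `i : Fin n`, is the
`Λ`-linear map determined by `δ_i(f)·(x_i − x_{i+1}) = s_i•f − f`, and composition
is the product in `End_Λ(R)`.) -/
theorem demazure_reduced_word_independent (n : ℕ)
    (D : Fin n → Module.End (symmetricSubalgebra (Fin (n + 1)) ℂ)
      (MvPolynomial (Fin (n + 1)) ℂ))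
    (hD : ∀ (i : Fin n) (f : MvPolynomial (Fin (n + 1)) ℂ),
      D i f * (X i.castSucc - X i.succ) =
        rename (⇑(Equiv.swap i.castSucc i.succ)) f - f)
    (w : Equiv.Perm (Fin (n + 1))) (l₁ l₂ : List (Fin n))
    -- l₁ is a reduced expression for w
    (h₁ : (l₁.map fun i => Equiv.swap i.castSucc i.succ).prod = w)
    (h₁min : ∀ l : List (Fin n),
      (l.map fun i => Equiv.swap i.castSucc i.succ).prod = w → l₁.length ≤ l.length)
    -- l₂ is a reduced expression for w
    (h₂ : (l₂.map fun i => Equiv.swap i.castSucc i.succ).prod = w)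
    (h₂min : ∀ l : List (Fin n),
      (l.map fun i => Equiv.swap i.castSucc i.succ).prod = w → l₂.length ≤ l.length) :
    (l₁.map D).prod = (l₂.map D).prod := by
  have hpw1 : DemAux.pw l₁ = w := h₁
  have hpw2 : DemAux.pw l₂ = w := h₂
  obtain ⟨l₀, hl₀, hl₀len⟩ := DemAux.exists_word (n := n) w
  have hl₀' : (l₀.map fun i => Equiv.swap i.castSucc i.succ).prod = w := hl₀
  have e₁ : l₁.length = DemAux.inv w :=
    le_antisymm (hl₀len ▸ h₁min l₀ hl₀') (hpw1 ▸ DemAux.inv_le_length l₁)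
  have e₂ : l₂.length = DemAux.inv w :=
    le_antisymm (hl₀len ▸ h₂min l₀ hl₀') (hpw2 ▸ DemAux.inv_le_length l₂)
  exact DemAux.main_ind D hD l₁.length l₁ l₂ rfl (by rw [hpw1, hpw2])
    (by rw [hpw1]; exact e₁) (by rw [hpw2]; exact e₂)
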